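/- Let $t \geq 1$, $q \geq 1$, and let $r : V \to \mathbb{N}$ be a function on the vertices of a graph $G$ of linearly bounded growth with parameter $q$ (every ball of radius $\rho$ has at most $q\rho$ vertices). Fix a vertex $v$ with $r(v) > 0$, and suppose that for every integer $k \geq 1$: $r(v) - 2k - 2t \leq \sum_{u \in S(v,k,k+2t)} r(u)$, where $S(v,k_1,k_2)$ is the set of vertices at distance between $k_1$ and $k_2$ from $v$. Then with $\alpha = \frac{1}{8tq}$ and $\beta = \frac{3}{2q}$: $\alpha\, r(v) - \beta \leq \frac{1}{|S(v,1,r(v)/2)|} \sum_{u \in S(v,1,r(v)/2)} r(u)$. -/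

import Mathlib

set_option maxHeartbeats 1000000 in

lemma stmt_8_key (T Q R N C Sg : ℝ) (hT : 1 ≤ T) (hQ : 1 ≤ Q)
    (hR : 12 * T + 1 ≤ R) (hN1 : R - 1 ≤ 2 * N) (hN2 : 2 * N ≤ R)
    (hC1 : 1 ≤ C) (hC2 : C ≤ Q * N) (hSgnn : 0 ≤ Sg)
    (hSg : (N - 2 * T) * R - (N - 2 * T) * ((N - 2 * T) + 1) - 2 * T * (N - 2 * T)
        ≤ (2 * T + 1) * Sg) :
    1 / (8 * T * Q) * R - 3 / (2 * Q) ≤ Sg / C := by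
  have hTpos : (0:ℝ) < T := by linarith
  have hQpos : (0:ℝ) < Q := by linarith
  have hCpos : (0:ℝ) < C := by linarith
  have hRpos : (0:ℝ) < R := by linarith
  have h2T1 : (0:ℝ) < 2 * T + 1 := by linarith
  have h1 : 1 / (8 * T * Q) * R - 3 / (2 * Q) = (R - 12 * T) / (8 * T * Q) := by
    rw [div_mul_eq_mul_div, div_sub_div _ _ (by positivity) (by positivity), div_eq_div_iff (by positivity) (by positivity)]
    ring
  rw [h1, div_le_div_iff₀ (by positivity) hCpos]
  -- goal : (R - 12*T) * C ≤ Sg * (8*T*Q)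
  have hK : (N - 2 * T) * (R - N - 1) ≤ (2 * T + 1) * Sg := by nlinarith [hSg]
  have h12 : (0:ℝ) ≤ R - 12 * T := by linarith
  have step1 : (R - 12 * T) * C * (2 * T + 1) ≤ (R - 12 * T) * (Q * N) * (2 * T + 1) := by
    have := mul_le_mul_of_nonneg_left hC2 h12
    nlinarith
  have hNpos : (0:ℝ) ≤ N := by linarith
  have hcore : (R - 12 * T) * N * (2 * T + 1) ≤ 2 * T * ((R - 4 * T - 1) * (R - 2)) := by
    have hhalf : (R - 12 * T) * N * (2 * T + 1) ≤ (R - 12 * T) * (R / 2) * (2 * T + 1) := by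
      have hNR : N ≤ R / 2 := by linarith
      nlinarith [mul_le_mul_of_nonneg_left hNR h12]
    have hpoly : (R - 12 * T) * (R / 2) * (2 * T + 1) ≤ 2 * T * ((R - 4 * T - 1) * (R - 2)) := by
      nlinarith [mul_nonneg (mul_nonneg (by linarith : (0:ℝ) ≤ 2*T-1) hRpos.le) hRpos.le,
        mul_nonneg (mul_nonneg hTpos.le hTpos.le) hRpos.le, mul_nonneg hTpos.le hTpos.le]
    linarith
  have step2 : (R - 12 * T) * (Q * N) * (2 * T + 1) ≤ Q * (2 * T * ((R - 4 * T - 1) * (R - 2))) := by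
    have := mul_le_mul_of_nonneg_left hcore (le_of_lt hQpos)
    nlinarith
  have hB : 2 * T * ((R - 4 * T - 1) * (R - 2)) ≤ 8 * T * ((N - 2 * T) * (R - N - 1)) := by
    have hfac1 : (R - 4 * T - 1) / 2 ≤ N - 2 * T := by linarith
    have hfac2 : (R - 2) / 2 ≤ R - N - 1 := by linarith
    have hfac1' : (0:ℝ) ≤ (R - 4 * T - 1) / 2 := by linarith
    have hfac2' : (0:ℝ) ≤ (R - 2) / 2 := by linarith
    have := mul_le_mul hfac1 hfac2 hfac2' (by linarith : (0:ℝ) ≤ N - 2*T)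
    nlinarith
  have step3 : Q * (2 * T * ((R - 4 * T - 1) * (R - 2))) ≤ Q * (8 * T * ((N - 2 * T) * (R - N - 1))) :=
    mul_le_mul_of_nonneg_left hB (le_of_lt hQpos)
  have step4 : Q * (8 * T * ((N - 2 * T) * (R - N - 1))) ≤ Q * (8 * T * ((2 * T + 1) * Sg)) := by
    have := mul_le_mul_of_nonneg_left hK (by positivity : (0:ℝ) ≤ Q * (8 * T))
    nlinarith
  have final : (R - 12 * T) * C * (2 * T + 1) ≤ Sg * (8 * T * Q) * (2 * T + 1) := by
    calc (R - 12 * T) * C * (2 * T + 1) ≤ (R - 12 * T) * (Q * N) * (2 * T + 1) := step1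
    _ ≤ Q * (2 * T * ((R - 4 * T - 1) * (R - 2))) := step2
    _ ≤ Q * (8 * T * ((N - 2 * T) * (R - N - 1))) := step3
    _ ≤ Q * (8 * T * ((2 * T + 1) * Sg)) := step4
    _ = Sg * (8 * T * Q) * (2 * T + 1) := by ring
  exact le_of_mul_le_mul_right final h2T1


theorem stmt_8 {V : Type*} [Fintype V] (G : SimpleGraph V) (t q : ℕ)
    (ht : 1 ≤ t) (hq : 1 ≤ q)
    (hgrowth : ∀ (v : V) (ρ : ℕ), 1 ≤ ρ →
      (Finset.univ.filter (fun u => G.dist v u ≤ ρ)).card ≤ q * ρ)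
    (r : V → ℕ) (v : V) (hrv : 0 < r v)
    (hsim : ∀ k : ℕ, 1 ≤ k →
      (r v : ℝ) - 2 * k - 2 * t ≤
        ∑ u ∈ Finset.univ.filter (fun u => k ≤ G.dist v u ∧ G.dist v u ≤ k + 2 * t),
          (r u : ℝ)) :
    (1 / (8 * t * q) : ℝ) * r v - 3 / (2 * q) ≤
      (∑ u ∈ Finset.univ.filter (fun u => 1 ≤ G.dist v u ∧ G.dist v u ≤ r v / 2),
          (r u : ℝ)) /
        ((Finset.univ.filter (fun u => 1 ≤ G.dist v u ∧ G.dist v u ≤ r v / 2)).card : ℝ) := by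
  set N := r v / 2 with hNdef
  set S := Finset.univ.filter (fun u => 1 ≤ G.dist v u ∧ G.dist v u ≤ N) with hSdef
  have hSgnn : (0:ℝ) ≤ ∑ u ∈ S, (r u : ℝ) :=
    Finset.sum_nonneg fun u _ => Nat.cast_nonneg _
  have ht' : (1:ℝ) ≤ t := by exact_mod_cast ht
  have hq' : (1:ℝ) ≤ q := by exact_mod_cast hq
  by_cases hsmall : r v ≤ 12 * t
  · -- trivial case : LHS ≤ 0 ≤ RHS
    have hrhs : (0:ℝ) ≤ (∑ u ∈ S, (r u : ℝ)) / (S.card : ℝ) :=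
      div_nonneg hSgnn (by positivity)
    have hlhs : (1 / (8 * t * q) : ℝ) * r v ≤ 3 / (2 * q) := by
      rw [div_mul_eq_mul_div, div_le_div_iff₀ (by positivity) (by positivity)]
      have : (r v : ℝ) ≤ 12 * t := by exact_mod_cast hsmall
      nlinarith
    linarith
  · push_neg at hsmall
    have hRbig : 12 * t + 1 ≤ r v := hsmall
    have hN6 : 6 * t ≤ N := by omega
    have hN1 : 1 ≤ N := by omega
    set K := N - 2 * t with hKdef
    have hKN : K + 2 * t = N := by omega
    have hK1 : 1 ≤ K := by omega
    -- S is nonempty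
    have hSne : 1 ≤ S.card := by
      by_contra hc
      have hS0 : S = ∅ := by
        rcases Finset.eq_empty_or_nonempty S with h | h
        · exact h
        · exact absurd (Finset.card_pos.mpr h) (by omega)
      have hsub : Finset.univ.filter (fun u => 1 ≤ G.dist v u ∧ G.dist v u ≤ 1 + 2 * t) ⊆ S := by
        intro u hu
        simp only [hSdef, Finset.mem_filter, Finset.mem_univ, true_and] at hu ⊢
        omega
      have h1 := hsim 1 le_rfl
      have hle : ∑ u ∈ Finset.univ.filter
            (fun u => 1 ≤ G.dist v u ∧ G.dist v u ≤ 1 + 2 * t), (r u : ℝ)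
          ≤ ∑ u ∈ S, (r u : ℝ) :=
        Finset.sum_le_sum_of_subset_of_nonneg hsub (fun u _ _ => Nat.cast_nonneg _)
      rw [hS0, Finset.sum_empty] at hle
      push_cast at h1
      have hrc : (12 * t + 1 : ℝ) ≤ (r v : ℝ) := by exact_mod_cast hRbig
      linarith
    -- per-crown rewriting
    have hcrown : ∀ k ∈ Finset.Icc 1 K,
        ∑ u ∈ Finset.univ.filter (fun u => k ≤ G.dist v u ∧ G.dist v u ≤ k + 2 * t), (r u : ℝ)
          = ∑ u ∈ S, if k ≤ G.dist v u ∧ G.dist v u ≤ k + 2 * t then (r u : ℝ) else 0 := by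
      intro k hk
      rw [Finset.mem_Icc] at hk
      rw [← Finset.sum_filter]
      congr 1
      ext u
      simp only [hSdef, Finset.mem_filter, Finset.mem_univ, true_and]
      omega
    -- double counting
    have hswap : ∑ k ∈ Finset.Icc 1 K, ((r v : ℝ) - 2 * k - 2 * t)
        ≤ (2 * t + 1) * ∑ u ∈ S, (r u : ℝ) := by
      calc ∑ k ∈ Finset.Icc 1 K, ((r v : ℝ) - 2 * k - 2 * t)
          ≤ ∑ k ∈ Finset.Icc 1 K,
              ∑ u ∈ Finset.univ.filter (fun u => k ≤ G.dist v u ∧ G.dist v u ≤ k + 2 * t),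
                (r u : ℝ) :=
            Finset.sum_le_sum fun k hk => hsim k (Finset.mem_Icc.mp hk).1
        _ = ∑ u ∈ S, ∑ k ∈ Finset.Icc 1 K,
              (if k ≤ G.dist v u ∧ G.dist v u ≤ k + 2 * t then (r u : ℝ) else 0) := by
            rw [← Finset.sum_comm]
            exact Finset.sum_congr rfl hcrown
        _ ≤ ∑ u ∈ S, (2 * t + 1) * (r u : ℝ) := by
            apply Finset.sum_le_sum
            intro u _
            rw [← Finset.sum_filter, Finset.sum_const, nsmul_eq_mul]
            have hsub : (Finset.Icc 1 K).filter (fun k => k ≤ G.dist v u ∧ G.dist v u ≤ k + 2 * t)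
                ⊆ Finset.Icc (G.dist v u - 2 * t) (G.dist v u) := by
              intro k hk
              simp only [Finset.mem_filter, Finset.mem_Icc] at hk ⊢
              omega
            have hcard : ((Finset.Icc 1 K).filter
                (fun k => k ≤ G.dist v u ∧ G.dist v u ≤ k + 2 * t)).card ≤ 2 * t + 1 := by
              have := Finset.card_le_card hsub
              rw [Nat.card_Icc] at this
              omega
            have hcard' : (((Finset.Icc 1 K).filter
                (fun k => k ≤ G.dist v u ∧ G.dist v u ≤ k + 2 * t)).card : ℝ)
                ≤ 2 * (t : ℝ) + 1 := by exact_mod_cast hcard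
            have hru : (0:ℝ) ≤ r u := Nat.cast_nonneg _
            exact mul_le_mul_of_nonneg_right hcard' hru
        _ = (2 * t + 1) * ∑ u ∈ S, (r u : ℝ) := by rw [Finset.mul_sum]
    -- Gauss sum
    have hgauss : (∑ k ∈ Finset.Icc 1 K, k) * 2 = K * (K + 1) := by
      induction K with
      | zero => simp
      | succ n ih =>
          rw [Finset.sum_Icc_succ_top (by omega : 1 ≤ n + 1)]
          ring_nf
          ring_nf at ih
          omega
    have hg : ∑ k ∈ Finset.Icc 1 K, (k : ℝ) = (K : ℝ) * ((K : ℝ) + 1) / 2 := by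
      have h' : ((∑ k ∈ Finset.Icc 1 K, k : ℕ) : ℝ) * 2 = (K : ℝ) * ((K : ℝ) + 1) := by
        exact_mod_cast congrArg (fun n : ℕ => (n : ℝ)) hgauss
      rw [Nat.cast_sum] at h'
      linarith
    have hcard2 : (Finset.Icc 1 K).card = K := by rw [Nat.card_Icc]; omega
    have hlhsum : ∑ k ∈ Finset.Icc 1 K, ((r v : ℝ) - 2 * k - 2 * t)
        = (K : ℝ) * (r v) - (K : ℝ) * ((K : ℝ) + 1) - 2 * t * K := by
      rw [Finset.sum_sub_distrib, Finset.sum_sub_distrib, ← Finset.mul_sum, hg,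
        Finset.sum_const, Finset.sum_const, hcard2]
      simp only [nsmul_eq_mul]
      ring
    -- growth bound
    have hgrow : S.card ≤ q * N := by
      have hsub : S ⊆ Finset.univ.filter (fun u => G.dist v u ≤ N) := by
        intro u hu
        simp only [hSdef, Finset.mem_filter, Finset.mem_univ, true_and] at hu ⊢
        omega
      exact le_trans (Finset.card_le_card hsub) (hgrowth v N hN1)
    -- assemble
    have hKcast : (K : ℝ) = (N : ℝ) - 2 * t := by
      have h := hKN
      have : ((K + 2 * t : ℕ) : ℝ) = (N : ℝ) := by exact_mod_cast congrArg (fun n : ℕ => (n : ℝ)) h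
      push_cast at this
      linarith
    apply stmt_8_key (t : ℝ) (q : ℝ) (r v : ℝ) (N : ℝ) (S.card : ℝ) _ ht' hq'
    · exact_mod_cast hRbig
    · have h2N : r v ≤ 2 * N + 1 := by omega
      have : (r v : ℝ) ≤ 2 * (N : ℝ) + 1 := by exact_mod_cast h2N
      linarith
    · exact_mod_cast (by omega : 2 * N ≤ r v)
    · exact_mod_cast hSne
    · exact_mod_cast hgrow
    · exact hSgnn
    · rw [hlhsum] at hswap
      rw [← hKcast]
      linarith [hswap]
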